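/- Let p ≥ 1 and let q be an odd integer with 1 ≤ q < 2p and gcd(q, 2p) = 1. For 1 ≤ j ≤ 2p−1 set ε_j = (−1)^{⌊jq/(2p)⌋}. Let X, X' be matrices in SL_2(C) with tr(X) = tr(X') = 0, and let W = (X')^{ε_1}·X^{ε_2}·(X')^{ε_3}·⋯·X^{ε_{2p−2}}·(X')^{ε_{2p−1}} be the alternating word (letters with odd index are powers of X', letters with even index are powers of X). Let k be the number of indices j with 1 ≤ j ≤ 2p−2 such that ε_j = −1. Then X^{-1}·W·X·(X')^{-1} = (−1)^k·(XX')^{p+1} in SL_2(C). -/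

import Mathlib

open Matrix

/-- The sign `ε_j = (−1)^{⌊jq/(2p)⌋}` appearing in the relator word of the
two-bridge link `b(2p, q)`. -/
def twoBridgeSign (p q j : ℕ) : ℤ := (-1) ^ ((j * q) / (2 * p))

/-- The relator word `W = (X')^{ε_1}·X^{ε_2}·(X')^{ε_3}·⋯·X^{ε_{2p−2}}·(X')^{ε_{2p−1}}`:
letters with odd index are powers of `X'`, letters with even index are powers of `X`. -/
def twoBridgeWord (p q : ℕ) (X X' : Matrix.SpecialLinearGroup (Fin 2) ℂ) :
    Matrix.SpecialLinearGroup (Fin 2) ℂ :=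
  ((List.range (2 * p - 1)).map fun i =>
    (if (i + 1) % 2 = 1 then X' else X) ^ twoBridgeSign p q (i + 1)).prod

namespace TwoBridgeAux

abbrev SL2 := Matrix.SpecialLinearGroup (Fin 2) ℂ

lemma coe_inv_traceless (A : SL2) (h : Matrix.trace (A : Matrix (Fin 2) (Fin 2) ℂ) = 0) :
    ((A⁻¹ : SL2) : Matrix (Fin 2) (Fin 2) ℂ) = -(A : Matrix (Fin 2) (Fin 2) ℂ) := by
  rw [Matrix.SpecialLinearGroup.coe_inv, Matrix.adjugate_fin_two]
  rw [Matrix.trace_fin_two] at h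
  ext i j
  fin_cases i <;> fin_cases j <;> simp <;> linear_combination h

lemma coe_zpow_sign (A : SL2) (h : Matrix.trace (A : Matrix (Fin 2) (Fin 2) ℂ) = 0) (m : ℕ) :
    ((A ^ ((-1 : ℤ) ^ m) : SL2) : Matrix (Fin 2) (Fin 2) ℂ)
      = ((((-1 : ℤ) ^ m : ℤ) : ℂ)) • (A : Matrix (Fin 2) (Fin 2) ℂ) := by
  rcases Nat.even_or_odd m with he | ho
  · rw [he.neg_one_pow]; simp
  · rw [ho.neg_one_pow, _root_.zpow_neg_one, coe_inv_traceless A h]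
    push_cast
    simp

/-- alternating partial products: index `n+1` contributes `B` if `n+1` is odd, `A` if even. -/
noncomputable def altp (A B : Matrix (Fin 2) (Fin 2) ℂ) : ℕ → Matrix (Fin 2) (Fin 2) ℂ
  | 0 => 1
  | n + 1 => altp A B n * (if (n + 1) % 2 = 1 then B else A)

lemma altp_spec (A B : Matrix (Fin 2) (Fin 2) ℂ) (m : ℕ) :
    altp A B (2 * m) = (B * A) ^ m ∧ altp A B (2 * m + 1) = (B * A) ^ m * B := by
  induction m with
  | zero =>
    constructor
    · show altp A B 0 = _; simp [altp]
    · show altp A B 0 * (if (0 + 1) % 2 = 1 then B else A) = _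
      norm_num [altp]
  | succ m ih =>
    have h2 : 2 * (m + 1) = (2 * m + 1) + 1 := by omega
    have heven : altp A B (2 * (m + 1)) = (B * A) ^ (m + 1) := by
      rw [h2]
      show altp A B (2 * m + 1) * (if (2 * m + 1 + 1) % 2 = 1 then B else A) = _
      rw [if_neg (by omega), ih.2, pow_succ, mul_assoc]
    refine ⟨heven, ?_⟩
    show altp A B (2 * (m + 1)) * (if (2 * (m + 1) + 1) % 2 = 1 then B else A) = _
    rw [if_pos (by omega), heven]

lemma mul_pow_swap (A B : Matrix (Fin 2) (Fin 2) ℂ) (n : ℕ) :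
    A * (B * A) ^ n = (A * B) ^ n * A := by
  induction n with
  | zero => simp
  | succ n ih =>
    rw [pow_succ, pow_succ, ← mul_assoc, ih]
    noncomm_ring

end TwoBridgeAux

open TwoBridgeAux
/-- For the two-bridge link `b(2p, q)` with `q` odd, `1 ≤ q < 2p`, `gcd(q, 2p) = 1`,
traceless `X, X' ∈ SL₂(ℂ)`, and `k` the number of `1 ≤ j ≤ 2p−2` with `ε_j = −1`,
one has `X⁻¹·W·X·(X')⁻¹ = (−1)^k·(XX')^{p+1}`. -/
theorem twoBridge_word_reduction' (p q : ℕ) (hp : 1 ≤ p) (hq_odd : Odd q)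
    (hq1 : 1 ≤ q) (hq2 : q < 2 * p) (hgcd : Nat.gcd q (2 * p) = 1)
    (X X' : Matrix.SpecialLinearGroup (Fin 2) ℂ)
    (hX : Matrix.trace (X : Matrix (Fin 2) (Fin 2) ℂ) = 0)
    (hX' : Matrix.trace ((X' : Matrix (Fin 2) (Fin 2) ℂ)) = 0)
    (k : ℕ)
    (hk : k = ((Finset.Icc 1 (2 * p - 2)).filter fun j => twoBridgeSign p q j = -1).card) :
    ((X⁻¹ * twoBridgeWord p q X X' * X * X'⁻¹ : Matrix.SpecialLinearGroup (Fin 2) ℂ) :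
        Matrix (Fin 2) (Fin 2) ℂ) =
      ((-1 : ℂ) ^ k) • (((X * X') ^ (p + 1) : Matrix.SpecialLinearGroup (Fin 2) ℂ) :
        Matrix (Fin 2) (Fin 2) ℂ) := by
  set A : Matrix (Fin 2) (Fin 2) ℂ := (X : Matrix (Fin 2) (Fin 2) ℂ) with hA
  set B : Matrix (Fin 2) (Fin 2) ℂ := (X' : Matrix (Fin 2) (Fin 2) ℂ) with hB
  -- the word as matrix, as scalar times alternating product
  have key : ∀ n : ℕ,
      ((((List.range n).map fun i =>
          (if (i + 1) % 2 = 1 then X' else X) ^ twoBridgeSign p q (i + 1)).prod : SL2) :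
        Matrix (Fin 2) (Fin 2) ℂ)
        = (((∏ i ∈ Finset.range n, twoBridgeSign p q (i + 1) : ℤ)) : ℂ) • altp A B n := by
    intro n
    induction n with
    | zero => simp [altp]
    | succ n ih =>
      rw [List.range_succ, List.map_append, List.prod_append]
      simp only [List.map_cons, List.map_nil, List.prod_cons, List.prod_nil, mul_one]
      rw [Matrix.SpecialLinearGroup.coe_mul, ih, Finset.prod_range_succ]
      have hlet : Matrix.trace (((if (n + 1) % 2 = 1 then X' else X) : SL2) :
          Matrix (Fin 2) (Fin 2) ℂ) = 0 := by
        split <;> assumption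
      have hcoe : (((if (n + 1) % 2 = 1 then X' else X) ^ twoBridgeSign p q (n + 1) : SL2) :
          Matrix (Fin 2) (Fin 2) ℂ)
          = ((twoBridgeSign p q (n + 1) : ℤ) : ℂ) • (if (n + 1) % 2 = 1 then B else A) := by
        rw [twoBridgeSign, coe_zpow_sign _ hlet]
        congr 1
        split <;> rfl
      rw [hcoe]
      show _ = _ • (altp A B n * (if (n + 1) % 2 = 1 then B else A))
      rw [smul_mul_assoc, mul_smul_comm, smul_smul]
      push_cast
      ring_nf
  -- arithmetic: the last sign ε_{2p-1} = 1
  obtain ⟨m, rfl⟩ : ∃ m, q = m + 1 := ⟨q - 1, by omega⟩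
  obtain ⟨r, hr⟩ : ∃ r, 2 * p = (m + 1) + (r + 1) := ⟨2 * p - m - 2, by omega⟩
  have hmeven : Even m := by
    rcases hq_odd with ⟨t, ht⟩
    exact ⟨t, by omega⟩
  have hdiv : ((2 * p - 1) * (m + 1)) / (2 * p) = m := by
    have h1 : 2 * p - 1 = m + 1 + r := by omega
    rw [h1, hr]
    have h2 : (m + 1 + r) * (m + 1) = ((m + 1) + (r + 1)) * m + (r + 1) := by ring
    rw [h2, Nat.mul_add_div (by omega), Nat.div_eq_of_lt (by omega), add_zero]
  have hlast : twoBridgeSign p (m + 1) (2 * p - 1) = 1 := by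
    rw [twoBridgeSign, hdiv, hmeven.neg_one_pow]
  -- the sign product equals (-1)^k
  have hscal : (∏ i ∈ Finset.range (2 * p - 1), twoBridgeSign p (m + 1) (i + 1)) = (-1) ^ k := by
    have h1 : (∏ i ∈ Finset.range (2 * p - 1), twoBridgeSign p (m + 1) (i + 1))
        = ∏ j ∈ Finset.Icc 1 (2 * p - 1), twoBridgeSign p (m + 1) j := by
      rw [← Finset.Ico_add_one_right_eq_Icc, Finset.prod_Ico_eq_prod_range]
      simp [add_comm]
    have h2 : ∀ n, ∀ s : Finset ℕ,
        (∏ j ∈ s, twoBridgeSign p n j)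
          = (-1) ^ (s.filter fun j => twoBridgeSign p n j = -1).card := by
      intro n s
      have hpm : ∀ j ∈ s, twoBridgeSign p n j
          = if twoBridgeSign p n j = -1 then (-1 : ℤ) else 1 := by
        intro j _
        rcases Nat.even_or_odd ((j * n) / (2 * p)) with he | ho
        · rw [twoBridgeSign, he.neg_one_pow]; norm_num
        · rw [twoBridgeSign, ho.neg_one_pow]; norm_num
      rw [Finset.prod_congr rfl hpm, Finset.prod_ite, Finset.prod_const, Finset.prod_const,
        one_pow, mul_one]
    have h3 : Finset.Icc 1 (2 * p - 1) = insert (2 * p - 1) (Finset.Icc 1 (2 * p - 2)) := by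
      ext j
      simp only [Finset.mem_Icc, Finset.mem_insert]
      omega
    rw [h1, h2, h3, Finset.filter_insert, if_neg (by rw [hlast]; norm_num), hk]
  -- assemble
  rw [Matrix.SpecialLinearGroup.coe_mul, Matrix.SpecialLinearGroup.coe_mul,
    Matrix.SpecialLinearGroup.coe_mul, twoBridgeWord, key, hscal,
    coe_inv_traceless X hX, coe_inv_traceless X' hX']
  have h2p : 2 * p - 1 = 2 * (p - 1) + 1 := by omega
  rw [h2p, (altp_spec A B (p - 1)).2]
  have hmat : (-A) * ((B * A) ^ (p - 1) * B) * A * (-B) = (A * B) ^ (p + 1) := by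
    have hswap := mul_pow_swap A B (p - 1)
    have hpp : p + 1 = (p - 1) + 1 + 1 := by omega
    have hre : (-A) * ((B * A) ^ (p - 1) * B) * A * (-B)
        = (A * (B * A) ^ (p - 1)) * (B * A * B) := by noncomm_ring
    rw [hre, hswap, hpp, pow_succ, pow_succ]
    noncomm_ring
  have hRHS : (((X * X') ^ (p + 1) : SL2) : Matrix (Fin 2) (Fin 2) ℂ) = (A * B) ^ (p + 1) := by
    simp [hA, hB]
  rw [hRHS, ← hmat]
  push_cast
  simp only [mul_smul_comm, smul_mul_assoc]
  rfl
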